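/- Let G be the group presented by generators γ₁, γ₂, γ₃, …, γ_m (with m = n+3, n ≥ 0) and relations: γ₂ = γ₃⁻¹γ₂⁻¹γ₁γ₂γ₃, γ₁ = γ₂, (γ₁γ₂⋯γ_{m-1}) γ_m (γ₁γ₂⋯γ_{m-1})⁻¹ = γ₂, and γ_j = γ_{j+1} for j = 3, …, m-1. Then G is isomorphic to ℤ. -/

import Mathlib

/-- Generator `γ_{i+1}` (1-based in the paper) is `FreeGroup.of i` (0-based). -/
def gamma (n : ℕ) (i : Fin (n + 3)) : FreeGroup (Fin (n + 3)) := FreeGroup.of i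

/-- The product `γ₁ γ₂ ⋯ γ_{m-1}` with `m = n + 3`. -/
def frontProd (n : ℕ) : FreeGroup (Fin (n + 3)) :=
  (List.ofFn fun i : Fin (n + 2) => gamma n i.castSucc).prod

/-- Relations of the Zariski–van Kampen presentation of `π₁(D⁴ ∖ S₂(n))`:
`γ₂ = γ₃⁻¹γ₂⁻¹γ₁γ₂γ₃`, `γ₁ = γ₂`,
`(γ₁⋯γ_{m-1}) γ_m (γ₁⋯γ_{m-1})⁻¹ = γ₂`, and `γ_j = γ_{j+1}` for `j = 3, …, m-1`. -/
def rels₂ (n : ℕ) : Set (FreeGroup (Fin (n + 3))) :=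
  {r | r = gamma n 1 *
            ((gamma n 2)⁻¹ * (gamma n 1)⁻¹ * gamma n 0 * gamma n 1 * gamma n 2)⁻¹ ∨
       r = gamma n 0 * (gamma n 1)⁻¹ ∨
       r = frontProd n * gamma n (Fin.last (n + 2)) * (frontProd n)⁻¹ * (gamma n 1)⁻¹ ∨
       ∃ j : Fin n, r = gamma n ⟨j.val + 2, by omega⟩ * (gamma n ⟨j.val + 3, by omega⟩)⁻¹}

theorem stmt_7 (n : ℕ) :
    Nonempty (PresentedGroup (rels₂ n) ≃* Multiplicative ℤ) := by
  classical
  set f : Fin (n + 3) → Multiplicative ℤ := fun _ => Multiplicative.ofAdd 1 with hf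
  have hrels : ∀ r ∈ rels₂ n, FreeGroup.lift f r = 1 := by
    rintro r (rfl | rfl | rfl | ⟨j, rfl⟩)
    · simp only [gamma, map_mul, map_inv, FreeGroup.lift_apply_of, hf]
      group
    · simp only [gamma, map_mul, map_inv, FreeGroup.lift_apply_of, hf]
      group
    · simp only [gamma, map_mul, map_inv, FreeGroup.lift_apply_of, hf]
      rw [mul_comm (FreeGroup.lift f (frontProd n)) (Multiplicative.ofAdd 1)]
      rw [← hf]
      group
    · simp only [gamma, map_mul, map_inv, FreeGroup.lift_apply_of, hf]
      group
  set φ : PresentedGroup (rels₂ n) →* Multiplicative ℤ := PresentedGroup.toGroup hrels with hφ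
  set x : Fin (n + 3) → PresentedGroup (rels₂ n) := PresentedGroup.of with hx
  set π : FreeGroup (Fin (n + 3)) →* PresentedGroup (rels₂ n) := PresentedGroup.mk (rels₂ n)
    with hπ
  have hone : ∀ r ∈ rels₂ n, π r = 1 := by
    intro r hr
    exact (QuotientGroup.eq_one_iff r).mpr (Subgroup.subset_normalClosure hr)
  have hπγ : ∀ i, π (gamma n i) = x i := fun i => rfl
  -- relation 2 : x 0 = x 1
  have h2 : x 0 = x 1 := by
    have := hone _ (Or.inr (Or.inl rfl))
    rw [map_mul, map_inv, hπγ, hπγ, mul_inv_eq_one] at this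
    exact this
  -- relation 4 : chain
  have h4 : ∀ j : Fin n, x ⟨j.val + 2, by omega⟩ = x ⟨j.val + 3, by omega⟩ := by
    intro j
    have := hone _ (Or.inr (Or.inr (Or.inr ⟨j, rfl⟩)))
    rw [map_mul, map_inv, hπγ, hπγ, mul_inv_eq_one] at this
    exact this
  have htwo : (2 : Fin (n + 3)) = ⟨2, by omega⟩ := by
    ext
    simp [Fin.val_two]
  have hge2 : ∀ k (hk : k + 2 < n + 3), x ⟨k + 2, hk⟩ = x ⟨2, by omega⟩ := by
    intro k
    induction k with
    | zero => intro _; rfl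
    | succ m ih =>
      intro hk
      have hm : m < n := by omega
      have := h4 ⟨m, hm⟩
      simp only at this
      rw [← this]
      exact ih (by omega)
  -- relation 1 gives commutation
  have h1 : x 1 * x ⟨2, by omega⟩ = x ⟨2, by omega⟩ * x 1 := by
    have := hone _ (Or.inl rfl)
    simp only [map_mul, map_inv, hπγ, mul_inv_eq_one] at this
    rw [htwo] at this
    -- this : x 1 = (x ⟨2,_⟩)⁻¹ * (x 1)⁻¹ * x 0 * x 1 * x ⟨2,_⟩
    rw [h2] at this
    -- x 1 = x2⁻¹ * x1⁻¹ * x1 * x1 * x2 = x2⁻¹ * x1 * x2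
    have h' : x ⟨2, by omega⟩ * x 1 = x 1 * x ⟨2, by omega⟩ := by
      calc x ⟨2, by omega⟩ * x 1
          = x ⟨2, by omega⟩ * ((x ⟨2, by omega⟩)⁻¹ * (x 1)⁻¹ * x 1 * x 1 * x ⟨2, by omega⟩) := by
            rw [← this]
        _ = x 1 * x ⟨2, by omega⟩ := by group
    exact h'.symm
  -- relation 3 gives x2 = x1
  have hF : Commute (x ⟨2, by omega⟩) (π (frontProd n)) := by
    rw [frontProd, map_list_prod]
    apply Commute.list_prod_right
    intro y hy
    rw [List.map_ofFn] at hy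
    obtain ⟨i, rfl⟩ := List.mem_ofFn.mp hy
    simp only [Function.comp_apply, hπγ]
    rcases Nat.lt_or_ge i.val 2 with hi | hi
    · have : x i.castSucc = x 1 := by
        interval_cases h : i.val
        · have : i.castSucc = 0 := by ext; simpa [Fin.castSucc] using h
          rw [this, h2]
        · have : i.castSucc = 1 := by ext; simpa [Fin.castSucc] using h
          rw [this]
      rw [this]
      exact h1.symm
    · have hi' : i.castSucc = ⟨(i.val - 2) + 2, by omega⟩ := by
        ext; simp [Fin.castSucc]; omega
      rw [hi', hge2 (i.val - 2) (by omega)]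
  have h3 : x ⟨2, by omega⟩ = x 1 := by
    have := hone _ (Or.inr (Or.inr (Or.inl rfl)))
    rw [map_mul, map_mul, map_mul, map_inv, map_inv, hπγ, hπγ, mul_inv_eq_one] at this
    have hlast : x (Fin.last (n + 2)) = x ⟨2, by omega⟩ := by
      have : (Fin.last (n + 2)) = (⟨n + 2, by omega⟩ : Fin (n + 3)) := rfl
      rw [this]
      exact hge2 n (by omega)
    rw [hlast, ← hF.eq, mul_inv_cancel_right] at this
    exact this
  have hall : ∀ i : Fin (n + 3), x i = x 1 := by
    intro i
    rcases Nat.lt_or_ge i.val 2 with hi | hi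
    · interval_cases h : i.val
      · have : i = 0 := by ext; simpa using h
        rw [this, h2]
      · have : i = 1 := by ext; simpa using h
        rw [this]
    · have : i = ⟨(i.val - 2) + 2, by omega⟩ := by ext; simp; omega
      rw [this, hge2, h3]
  -- build the equivalence
  set ψ : Multiplicative ℤ →* PresentedGroup (rels₂ n) := zpowersHom _ (x 1) with hψ
  have hl : ψ.comp φ = MonoidHom.id _ := by
    apply PresentedGroup.ext
    intro i
    simp only [MonoidHom.comp_apply, MonoidHom.id_apply, hφ, hψ]
    rw [PresentedGroup.toGroup.of]
    simp only [hf, zpowersHom_apply]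
    rw [toAdd_ofAdd, zpow_one]
    exact (hall i).symm
  have hr : φ.comp ψ = MonoidHom.id _ := by
    apply MonoidHom.ext_mint
    simp only [MonoidHom.comp_apply, MonoidHom.id_apply, hψ, zpowersHom_apply]
    rw [toAdd_ofAdd, zpow_one, hφ, hx]
    rw [PresentedGroup.toGroup.of]
  exact ⟨MonoidHom.toMulEquiv φ ψ hl hr⟩
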